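/- Let (R, m) → (S, n) be a local homomorphism of Noetherian local rings and M a finitely generated R-module with Tor_i^R(M, S) = 0 for all i > 0. Then pd_R M < ∞ if and only if pd_S (M ⊗_R S) < ∞. -/

import Mathlib

open CategoryTheory

/-- The `i`-th Ext group of `R`-modules `M` and `N`. -/
noncomputable abbrev ExtGroup (R : Type) [CommRing R] (M N : ModuleCat.{0} R) (i : ℕ) : Type :=
  (((Ext R (ModuleCat.{0} R) i).obj (Opposite.op M)).obj N)

/-- The `i`-th Tor group of `R`-modules `M` and `N`. -/
noncomputable abbrev TorGroup (R : Type) [CommRing R] (M N : ModuleCat.{0} R) (i : ℕ) : Type :=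
  (((Tor (ModuleCat.{0} R) i).obj M).obj N)

/-- `IsSyzygyOf R n K M`: `K` is an `n`-th syzygy of `M` in a resolution of `M` by
finitely generated free `R`-modules. -/
inductive IsSyzygyOf (R : Type) [CommRing R] : ℕ → ModuleCat.{0} R → ModuleCat.{0} R → Prop
  | zero (M : ModuleCat.{0} R) : IsSyzygyOf R 0 M M
  | succ {n : ℕ} {K N M : ModuleCat.{0} R} (F : ModuleCat.{0} R)
      (hfree : Module.Free R F) (hfin : Module.Finite R F)
      (f : K →ₗ[R] F) (g : F →ₗ[R] N)
      (hf : Function.Injective f) (hg : Function.Surjective g)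
      (hfg : LinearMap.range f = LinearMap.ker g)
      (hN : IsSyzygyOf R n N M) : IsSyzygyOf R (n + 1) K M

/-- A finitely generated module over a Noetherian local ring has projective dimension
at most `n` iff some `n`-th syzygy of it (in a finite free resolution) is free. -/
def ProjDimLE (R : Type) [CommRing R] (n : ℕ) (M : ModuleCat.{0} R) : Prop :=
  ∃ K : ModuleCat.{0} R, IsSyzygyOf R n K M ∧ Module.Free R K


open LinearMap TensorProduct

namespace Stmt12Aux

variable {R : Type} [CommRing R]
variable {K F N A B C D : Type}
  [AddCommGroup K] [AddCommGroup F] [AddCommGroup N] [AddCommGroup A]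
  [AddCommGroup B] [AddCommGroup C] [AddCommGroup D]
  [Module R K] [Module R F] [Module R N] [Module R A] [Module R B] [Module R C] [Module R D]

/-- Core diagram chase: the common part. Given a short exact sequence `K → F → N` and a
complex segment `D → C → B → A`, with suitable exactness hypotheses, any `x : K ⊗ B`
whose image in `F ⊗ B` is hit from `F ⊗ C` is itself hit from `K ⊗ C`. -/
theorem chase_core (f : K →ₗ[R] F) (g : F →ₗ[R] N)
    (hg : Function.Surjective g) (hgf : ∀ k, g (f k) = 0)
    (q : D →ₗ[R] C) (p : C →ₗ[R] B)
    (hpq : ∀ d, p (q d) = 0)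
    (hNex : Function.Exact (lTensor N q) (lTensor N p))
    (hC : Function.Exact (rTensor C f) (rTensor C g))
    (hB : Function.Injective (rTensor B f))
    (x : K ⊗[R] B) (y : F ⊗[R] C) (hy : lTensor F p y = rTensor B f x) :
    ∃ w : K ⊗[R] C, lTensor K p w = x := by
  -- push y to N ⊗ C
  have h3 : lTensor N p (rTensor C g y) = 0 := by
    have : lTensor N p (rTensor C g y) = rTensor B g (lTensor F p y) := by
      rw [← LinearMap.comp_apply, ← LinearMap.comp_apply,
        lTensor_comp_rTensor, rTensor_comp_lTensor]
    rw [this, hy, ← LinearMap.comp_apply, ← rTensor_comp]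
    have : g ∘ₗ f = 0 := by ext k; exact hgf k
    rw [this, rTensor_zero, LinearMap.zero_apply]
  obtain ⟨z, hz⟩ := (hNex _).mp h3
  obtain ⟨z', hz'⟩ := rTensor_surjective D hg z
  have h5 : rTensor C g (y - lTensor F q z') = 0 := by
    have : rTensor C g (lTensor F q z') = lTensor N q (rTensor D g z') := by
      rw [← LinearMap.comp_apply, ← LinearMap.comp_apply,
        lTensor_comp_rTensor, rTensor_comp_lTensor]
    rw [map_sub, this, hz', hz, sub_self]
  obtain ⟨w, hw⟩ := (hC _).mp h5
  refine ⟨w, hB ?_⟩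
  have comm : rTensor B f (lTensor K p w) = lTensor F p (rTensor C f w) := by
    rw [← LinearMap.comp_apply, ← LinearMap.comp_apply,
      lTensor_comp_rTensor, rTensor_comp_lTensor]
  have hq0 : lTensor F p (lTensor F q z') = 0 := by
    rw [← LinearMap.comp_apply, ← lTensor_comp]
    have : p ∘ₗ q = 0 := by ext d; exact hpq d
    rw [this, lTensor_zero, LinearMap.zero_apply]
  rw [comm, hw, map_sub, hq0, sub_zero, hy]

/-- Dimension-shifting chase: exactness of `K ⊗ (C → B → A)`. -/
theorem chase_exact (f : K →ₗ[R] F) (g : F →ₗ[R] N)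
    (hg : Function.Surjective g) (hgf : ∀ k, g (f k) = 0)
    (q : D →ₗ[R] C) (p : C →ₗ[R] B) (r : B →ₗ[R] A)
    (hpq : ∀ d, p (q d) = 0) (hrp : ∀ c, r (p c) = 0)
    (hFex : Function.Exact (lTensor F p) (lTensor F r))
    (hNex : Function.Exact (lTensor N q) (lTensor N p))
    (hC : Function.Exact (rTensor C f) (rTensor C g))
    (hB : Function.Injective (rTensor B f)) :
    Function.Exact (lTensor K p) (lTensor K r) := by
  intro x
  constructor
  · intro hx
    have h1 : lTensor F r (rTensor B f x) = 0 := by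
      have : lTensor F r (rTensor B f x) = rTensor A f (lTensor K r x) := by
        rw [← LinearMap.comp_apply, ← LinearMap.comp_apply,
          lTensor_comp_rTensor, rTensor_comp_lTensor]
      rw [this, hx, map_zero]
    obtain ⟨y, hy⟩ := (hFex _).mp h1
    obtain ⟨w, hw⟩ := chase_core f g hg hgf q p hpq hNex hC hB x y hy
    exact ⟨w, hw⟩
  · rintro ⟨w, rfl⟩
    rw [← LinearMap.comp_apply, ← lTensor_comp]
    have : r ∘ₗ p = 0 := by ext c; exact hrp c
    rw [this, lTensor_zero, LinearMap.zero_apply]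

/-- Injectivity chase: injectivity of `f ⊗ A`. -/
theorem chase_inj (f : K →ₗ[R] F) (g : F →ₗ[R] N)
    (hg : Function.Surjective g) (hgf : ∀ k, g (f k) = 0)
    (q : D →ₗ[R] C) (p : C →ₗ[R] B) (r : B →ₗ[R] A)
    (hpq : ∀ d, p (q d) = 0) (hrp : ∀ c, r (p c) = 0)
    (hr : Function.Surjective r)
    (hFex : Function.Exact (lTensor F p) (lTensor F r))
    (hNex : Function.Exact (lTensor N q) (lTensor N p))
    (hC : Function.Exact (rTensor C f) (rTensor C g))
    (hB : Function.Injective (rTensor B f)) :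
    Function.Injective (rTensor A f) := by
  rw [injective_iff_map_eq_zero]
  intro x hx
  obtain ⟨x', hx'⟩ := lTensor_surjective K hr x
  have h1 : lTensor F r (rTensor B f x') = 0 := by
    have : lTensor F r (rTensor B f x') = rTensor A f (lTensor K r x') := by
      rw [← LinearMap.comp_apply, ← LinearMap.comp_apply,
        lTensor_comp_rTensor, rTensor_comp_lTensor]
    rw [this, hx', hx]
  obtain ⟨y, hy⟩ := (hFex _).mp h1
  obtain ⟨w, hw⟩ := chase_core f g hg hgf q p hpq hNex hC hB x' y hy
  rw [← hx', ← hw, ← LinearMap.comp_apply, ← lTensor_comp]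
  have : r ∘ₗ p = 0 := by ext c; exact hrp c
  rw [this, lTensor_zero, LinearMap.zero_apply]

end Stmt12Aux

open CategoryTheory MonoidalCategory

namespace Stmt12Aux
variable {R : Type} [CommRing R] {S : Type} [CommRing S] [Algebra R S]

variable (P : ProjectiveResolution (ModuleCat.of R S))

noncomputable abbrev dd (i : ℕ) : P.complex.X (i+1) →ₗ[R] P.complex.X i := (P.complex.d (i+1) i).hom
noncomputable abbrev ppi : P.complex.X 0 →ₗ[R] S := (P.π.f 0).hom

lemma ppi_surj : Function.Surjective (ppi P) := by
  have : Epi (P.π.f 0) := inferInstance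
  exact (ModuleCat.epi_iff_surjective _).mp this

lemma ppi_d : ∀ x, ppi P (dd P 0 x) = 0 := by
  intro x
  have h := P.complex_d_comp_π_f_zero
  calc ppi P (dd P 0 x) = (show S from (P.complex.d 1 0 ≫ P.π.f 0) x) := rfl
    _ = 0 := by rw [h]; rfl

lemma P_flat (i : ℕ) : Module.Flat R (P.complex.X i) := by
  have h1 : Projective (P.complex.X i) := inferInstance
  have h2 : Projective (ModuleCat.of R (P.complex.X i)) := h1
  have : Module.Projective R (P.complex.X i) := (IsProjective.iff_projective _).mpr h2
  exact Module.Flat.of_projective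

lemma P_exact (i : ℕ) : Function.Exact (dd P (i+1)) (dd P i) := by
  have h := P.exact_succ i
  rw [ShortComplex.moduleCat_exact_iff] at h
  intro x
  constructor
  · exact fun hx => h x hx
  · rintro ⟨y, rfl⟩
    have : (P.complex.d (i+2) (i+1) ≫ P.complex.d (i+1) i) y = 0 := by
      rw [P.complex.d_comp_d]; rfl
    exact this

lemma P_aug_exact : Function.Exact (dd P 0) (ppi P) := by
  have h : (ShortComplex.mk (P.complex.d 1 0) (P.π.f 0) P.complex_d_comp_π_f_zero).Exact :=
    ShortComplex.exact_of_g_is_cokernel _ P.isColimitCokernelCofork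
  rw [ShortComplex.moduleCat_exact_iff] at h
  intro x
  constructor
  · exact fun hx => h x hx
  · rintro ⟨y, rfl⟩
    exact ppi_d P y

/-- Concrete vanishing of (first-variable) Tor against `S`, w.r.t. the chosen resolution `P`. -/
def TV (N : Type) [AddCommGroup N] [Module R N] : Prop :=
  ∀ i : ℕ, Function.Exact (lTensor N (dd P (i+1))) (lTensor N (dd P i))

lemma TV_of_tor (M : Type) [AddCommGroup M] [Module R M]
    (h : ∀ i : ℕ, 0 < i →
      Subsingleton ((((Tor (ModuleCat.{0} R) i).obj (ModuleCat.of R M)).obj (ModuleCat.of R S)))) :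
    TV P M := by
  intro i
  set Ffun := (tensoringLeft (ModuleCat.{0} R)).obj (ModuleCat.of R M) with hFfun
  have hz : Limits.IsZero ((Ffun.leftDerived (i+1)).obj (ModuleCat.of R S)) :=
    @ModuleCat.isZero_of_subsingleton _ _ _ (h (i+1) (Nat.succ_pos i))
  set Q := (Ffun.mapHomologicalComplex (ComplexShape.down ℕ)).obj P.complex with hQ
  have hz2 : Limits.IsZero (Q.homology (i+1)) :=
    hz.of_iso (P.isoLeftDerivedObj Ffun (i+1)).symm
  have hex : Q.ExactAt (i+1) := (Q.exactAt_iff_isZero_homology (i+1)).mpr hz2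
  have hex2 : (Q.sc' (i+2) (i+1) i).Exact :=
    (Q.exactAt_iff' (i+2) (i+1) i (by simp) (by simp)).mp hex
  rw [ShortComplex.moduleCat_exact_iff] at hex2
  intro x
  constructor
  · intro hx
    exact hex2 x hx
  · rintro ⟨y, rfl⟩
    have : (Q.d (i+2) (i+1) ≫ Q.d (i+1) i) y = 0 := by rw [Q.d_comp_d]; rfl
    exact this

section steps
variable {K F N : Type}
  [AddCommGroup K] [AddCommGroup F] [AddCommGroup N]
  [Module R K] [Module R F] [Module R N]

lemma TV_step [Module.Flat R F] (f : K →ₗ[R] F) (g : F →ₗ[R] N)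
    (hf : Function.Injective f) (hg : Function.Surjective g)
    (hfg : LinearMap.range f = LinearMap.ker g) (hN : TV P N) : TV P K := by
  have hexfg : Function.Exact f g := LinearMap.exact_iff.mpr hfg.symm
  have hgf : ∀ k, g (f k) = 0 := fun k => by
    have : f k ∈ LinearMap.ker g := hfg ▸ LinearMap.mem_range_self f k
    exact this
  intro i
  have flatC : Module.Flat R (P.complex.X (i+2)) := P_flat P (i+2)
  have flatB : Module.Flat R (P.complex.X (i+1)) := P_flat P (i+1)
  exact chase_exact f g hg hgf
    (dd P (i+2)) (dd P (i+1)) (dd P i)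
    (fun d => by
      have : (P.complex.d (i+3) (i+2) ≫ P.complex.d (i+2) (i+1)) d = 0 := by
        rw [P.complex.d_comp_d]; rfl
      exact this)
    (fun c => by
      have : (P.complex.d (i+2) (i+1) ≫ P.complex.d (i+1) i) c = 0 := by
        rw [P.complex.d_comp_d]; rfl
      exact this)
    (Module.Flat.lTensor_exact F (P_exact P i))
    (hN (i+1))
    (Module.Flat.rTensor_exact (P.complex.X (i+2)) hexfg)
    (Module.Flat.rTensor_preserves_injective_linearMap f hf)

lemma inj_step [Module.Flat R F] (f : K →ₗ[R] F) (g : F →ₗ[R] N)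
    (hf : Function.Injective f) (hg : Function.Surjective g)
    (hfg : LinearMap.range f = LinearMap.ker g) (hN : TV P N) :
    Function.Injective (LinearMap.rTensor S f) := by
  have hexfg : Function.Exact f g := LinearMap.exact_iff.mpr hfg.symm
  have hgf : ∀ k, g (f k) = 0 := fun k => by
    have : f k ∈ LinearMap.ker g := hfg ▸ LinearMap.mem_range_self f k
    exact this
  have flatC : Module.Flat R (P.complex.X 1) := P_flat P 1
  have flatB : Module.Flat R (P.complex.X 0) := P_flat P 0
  exact chase_inj f g hg hgf
    (dd P 1) (dd P 0) (ppi P)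
    (fun d => by
      have : (P.complex.d 2 1 ≫ P.complex.d 1 0) d = 0 := by
        rw [P.complex.d_comp_d]; rfl
      exact this)
    (ppi_d P)
    (ppi_surj P)
    (Module.Flat.lTensor_exact F (P_aug_exact P))
    (hN 0)
    (Module.Flat.rTensor_exact (P.complex.X 1) hexfg)
    (Module.Flat.rTensor_preserves_injective_linearMap f hf)

end steps
end Stmt12Aux

namespace Stmt12Aux
variable {R : Type} [CommRing R] {S : Type} [CommRing S] [Algebra R S]
variable (P : ProjectiveResolution (ModuleCat.of R S))

lemma lTensor_inj_of_rTensor_inj {K F : Type} [AddCommGroup K] [AddCommGroup F]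
    [Module R K] [Module R F] (f : K →ₗ[R] F)
    (h : Function.Injective (LinearMap.rTensor S f)) :
    Function.Injective (LinearMap.lTensor S f) := by
  have heq : (TensorProduct.comm R F S).toLinearMap ∘ₗ LinearMap.rTensor S f ∘ₗ
      (TensorProduct.comm R S K).toLinearMap = LinearMap.lTensor S f := by
    apply TensorProduct.ext'
    intro s k
    rfl
  rw [← heq]
  simp only [LinearMap.coe_comp, LinearEquiv.coe_coe]
  exact (TensorProduct.comm R F S).injective.comp (h.comp (TensorProduct.comm R S K).injective)

end Stmt12Aux

section pkg
open Stmt12Aux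
variable {R : Type} [CommRing R] {S : Type} [CommRing S] [Algebra R S]
variable (P : ProjectiveResolution (ModuleCat.of R S))

lemma syzygy_package [IsNoetherianRing R] :
    ∀ {n : ℕ} {K M : ModuleCat.{0} R}, IsSyzygyOf R n K M → TV P M → Module.Finite R M →
      (TV P K ∧ Module.Finite R K ∧
        IsSyzygyOf S n (ModuleCat.of S (TensorProduct R S K))
          (ModuleCat.of S (TensorProduct R S M))) := by
  intro n K M h
  induction h with
  | zero M' =>
    intro h1 h2
    exact ⟨h1, h2, IsSyzygyOf.zero _⟩
  | @succ n K' N M' F hfree hfin f g hf hg hfg hN ih =>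
    intro hTVM hfinM
    obtain ⟨tvN, finN, syzN⟩ := ih hTVM hfinM
    letI := hfree
    letI := hfin
    have flatF : Module.Flat R F := inferInstance
    have tvK : TV P K' := TV_step P f g hf hg hfg tvN
    letI : IsNoetherian R F := isNoetherian_of_isNoetherianRing_of_finite R F
    have finK : Module.Finite R K' := Module.Finite.of_injective f hf
    have hexfg : Function.Exact f g := LinearMap.exact_iff.mpr hfg.symm
    have hex : Function.Exact (LinearMap.lTensor S f) (LinearMap.lTensor S g) :=
      lTensor_exact S hexfg hg
    have hf' : Function.Injective (LinearMap.baseChange S f) :=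
      lTensor_inj_of_rTensor_inj f (inj_step P f g hf hg hfg tvN)
    have hg' : Function.Surjective (LinearMap.baseChange S g) :=
      LinearMap.lTensor_surjective S hg
    have hfg' : LinearMap.range (LinearMap.baseChange S f) =
        LinearMap.ker (LinearMap.baseChange S g) := by
      ext x
      rw [LinearMap.mem_range, LinearMap.mem_ker]
      constructor
      · rintro ⟨y, rfl⟩
        exact (hex _).mpr ⟨y, rfl⟩
      · intro hx
        exact (hex x).mp hx
    refine ⟨tvK, finK, ?_⟩
    exact IsSyzygyOf.succ (ModuleCat.of S (TensorProduct R S F))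
      (inferInstance : Module.Free S (TensorProduct R S F))
      (inferInstance : Module.Finite S (TensorProduct R S F))
      (LinearMap.baseChange S f) (LinearMap.baseChange S g) hf' hg' hfg' syzN

end pkg

namespace Stmt12Aux

section schanuel
variable {S : Type} [CommRing S]

/-- Split a short exact sequence with projective quotient. -/
lemma split_ses {A B C : Type} [AddCommGroup A] [AddCommGroup B] [AddCommGroup C]
    [Module S A] [Module S B] [Module S C]
    (f : A →ₗ[S] B) (g : B →ₗ[S] C) (hf : Function.Injective f)
    (hg : Function.Surjective g) (hfg : LinearMap.range f = LinearMap.ker g)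
    (hC : Module.Projective S C) :
    Nonempty (B ≃ₗ[S] A × C) := by
  obtain ⟨σ, hσ⟩ := Module.projective_lifting_property g LinearMap.id hg
  have hσ' : ∀ c, g (σ c) = c := fun c => by
    have := congrArg (fun h => h c) (congrArg DFunLike.coe hσ)
    simpa using this
  have hbij : Function.Bijective (f.coprod σ) := by
    constructor
    · intro ⟨a₁, c₁⟩ ⟨a₂, c₂⟩ h
      simp only [LinearMap.coprod_apply] at h
      have hg1 : c₁ = c₂ := by
        have := congrArg g h
        simp only [map_add, hσ'] at this
        have hfa : ∀ a, g (f a) = 0 := fun a => by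
          have : f a ∈ LinearMap.ker g := hfg ▸ LinearMap.mem_range_self f a
          exact this
        rw [hfa, hfa, zero_add, zero_add] at this
        exact this
      subst hg1
      have : f a₁ = f a₂ := by
        have := add_right_cancel h
        exact this
      exact Prod.ext (hf this) rfl
    · intro b
      have hbk : b - σ (g b) ∈ LinearMap.ker g := by
        simp [LinearMap.mem_ker, map_sub, hσ']
      rw [← hfg] at hbk
      obtain ⟨a, ha⟩ := hbk
      exact ⟨(a, g b), by simp [LinearMap.coprod_apply, ha]⟩
  exact ⟨(LinearEquiv.ofBijective (f.coprod σ) hbij).symm⟩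

/-- Schanuel's lemma. -/
lemma schanuel {K₁ F₁ K₂ F₂ W : Type}
    [AddCommGroup K₁] [AddCommGroup F₁] [AddCommGroup K₂] [AddCommGroup F₂] [AddCommGroup W]
    [Module S K₁] [Module S F₁] [Module S K₂] [Module S F₂] [Module S W]
    (f₁ : K₁ →ₗ[S] F₁) (g₁ : F₁ →ₗ[S] W) (hf₁ : Function.Injective f₁)
    (hg₁ : Function.Surjective g₁) (hfg₁ : LinearMap.range f₁ = LinearMap.ker g₁)
    (f₂ : K₂ →ₗ[S] F₂) (g₂ : F₂ →ₗ[S] W) (hf₂ : Function.Injective f₂)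
    (hg₂ : Function.Surjective g₂) (hfg₂ : LinearMap.range f₂ = LinearMap.ker g₂)
    (hP₁ : Module.Projective S F₁) (hP₂ : Module.Projective S F₂) :
    Nonempty ((K₁ × F₂) ≃ₗ[S] (K₂ × F₁)) := by
  -- the pullback
  let X : Submodule S (F₁ × F₂) := LinearMap.ker (g₁.comp (LinearMap.fst S F₁ F₂) -
    g₂.comp (LinearMap.snd S F₁ F₂))
  have hmem : ∀ u : F₁ × F₂, u ∈ X ↔ g₁ u.1 = g₂ u.2 := by
    intro u
    simp only [X, LinearMap.mem_ker, LinearMap.sub_apply, LinearMap.comp_apply,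
      LinearMap.fst_apply, LinearMap.snd_apply, sub_eq_zero]
  -- projection to F₁
  let p₁ : X →ₗ[S] F₁ := (LinearMap.fst S F₁ F₂).comp X.subtype
  let p₂ : X →ₗ[S] F₂ := (LinearMap.snd S F₁ F₂).comp X.subtype
  have hp₁surj : Function.Surjective p₁ := by
    intro u
    obtain ⟨v, hv⟩ := hg₂ (g₁ u)
    exact ⟨⟨(u, v), (hmem _).mpr hv.symm⟩, rfl⟩
  have hp₂surj : Function.Surjective p₂ := by
    intro v
    obtain ⟨u, hu⟩ := hg₁ (g₂ v)
    exact ⟨⟨(u, v), (hmem _).mpr hu⟩, rfl⟩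
  -- K₂ → X
  let j₂ : K₂ →ₗ[S] X := LinearMap.codRestrict X ((LinearMap.inr S F₁ F₂).comp (f₂.comp
    (LinearMap.id))) (by
      intro k
      refine (hmem _).mpr ?_
      simp only [LinearMap.comp_apply, LinearMap.inr_apply, LinearMap.id_apply]
      have : f₂ k ∈ LinearMap.ker g₂ := hfg₂ ▸ LinearMap.mem_range_self f₂ k
      simpa using this.symm)
  have hj₂inj : Function.Injective j₂ := by
    intro a b h
    have := congrArg (fun x : X => (x : F₁ × F₂).2) h
    exact hf₂ this
  have hj₂ker : LinearMap.range j₂ = LinearMap.ker p₁ := by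
    ext x
    constructor
    · rintro ⟨k, rfl⟩
      rfl
    · intro hx
      have hx1 : (x : F₁ × F₂).1 = 0 := hx
      have : g₂ (x : F₁ × F₂).2 = 0 := by
        have := (hmem _).mp x.2
        rw [hx1, map_zero] at this
        exact this.symm
      obtain ⟨k, hk⟩ := (hfg₂ ▸ (this : (x : F₁ × F₂).2 ∈ LinearMap.ker g₂) :
        (x : F₁ × F₂).2 ∈ LinearMap.range f₂)
      refine ⟨k, ?_⟩
      apply Subtype.ext
      apply Prod.ext
      · exact hx1.symm
      · exact hk
  -- K₁ → X
  let j₁ : K₁ →ₗ[S] X := LinearMap.codRestrict X ((LinearMap.inl S F₁ F₂).comp f₁) (by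
      intro k
      refine (hmem _).mpr ?_
      simp only [LinearMap.comp_apply, LinearMap.inl_apply]
      have : f₁ k ∈ LinearMap.ker g₁ := hfg₁ ▸ LinearMap.mem_range_self f₁ k
      simpa using this)
  have hj₁inj : Function.Injective j₁ := by
    intro a b h
    have := congrArg (fun x : X => (x : F₁ × F₂).1) h
    exact hf₁ this
  have hj₁ker : LinearMap.range j₁ = LinearMap.ker p₂ := by
    ext x
    constructor
    · rintro ⟨k, rfl⟩
      rfl
    · intro hx
      have hx2 : (x : F₁ × F₂).2 = 0 := hx
      have : g₁ (x : F₁ × F₂).1 = 0 := by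
        have := (hmem _).mp x.2
        rw [hx2, map_zero] at this
        exact this
      obtain ⟨k, hk⟩ := (hfg₁ ▸ (this : (x : F₁ × F₂).1 ∈ LinearMap.ker g₁) :
        (x : F₁ × F₂).1 ∈ LinearMap.range f₁)
      refine ⟨k, ?_⟩
      apply Subtype.ext
      apply Prod.ext
      · exact hk
      · exact hx2.symm
  obtain ⟨e₁⟩ := split_ses j₂ p₁ hj₂inj hp₁surj hj₂ker hP₁
  obtain ⟨e₂⟩ := split_ses j₁ p₂ hj₁inj hp₂surj hj₁ker hP₂
  exact ⟨e₂.symm.trans e₁⟩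

/-- Stable equivalence of `S`-modules. -/
def StEq (X Y : Type) [AddCommGroup X] [AddCommGroup Y] [Module S X] [Module S Y] : Prop :=
  ∃ (A B : ModuleCat.{0} S), Module.Free S A ∧ Module.Finite S A ∧
    Module.Free S B ∧ Module.Finite S B ∧ Nonempty ((X × A) ≃ₗ[S] (Y × B))

end schanuel
end Stmt12Aux

namespace Stmt12Aux
section schanuel2
variable {S : Type} [CommRing S]

lemma stEq_refl (X : Type) [AddCommGroup X] [Module S X] : StEq (S := S) X X :=
  ⟨ModuleCat.of S PUnit, ModuleCat.of S PUnit, inferInstance, inferInstance, inferInstance,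
    inferInstance, ⟨LinearEquiv.refl S _⟩⟩

lemma stEq_step {K₁ F₁ N₁ K₂ F₂ N₂ : Type}
    [AddCommGroup K₁] [AddCommGroup F₁] [AddCommGroup N₁]
    [AddCommGroup K₂] [AddCommGroup F₂] [AddCommGroup N₂]
    [Module S K₁] [Module S F₁] [Module S N₁] [Module S K₂] [Module S F₂] [Module S N₂]
    [Module.Free S F₁] [Module.Finite S F₁] [Module.Free S F₂] [Module.Finite S F₂]
    (f₁ : K₁ →ₗ[S] F₁) (g₁ : F₁ →ₗ[S] N₁) (hf₁ : Function.Injective f₁)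
    (hg₁ : Function.Surjective g₁) (hfg₁ : LinearMap.range f₁ = LinearMap.ker g₁)
    (f₂ : K₂ →ₗ[S] F₂) (g₂ : F₂ →ₗ[S] N₂) (hf₂ : Function.Injective f₂)
    (hg₂ : Function.Surjective g₂) (hfg₂ : LinearMap.range f₂ = LinearMap.ker g₂)
    (hN : StEq (S := S) N₁ N₂) : StEq (S := S) K₁ K₂ := by
  obtain ⟨A, B, hfrA, hfinA, hfrB, hfinB, ⟨e⟩⟩ := hN
  letI := hfrA; letI := hfinA; letI := hfrB; letI := hfinB
  have hgk₁ : ∀ k, g₁ (f₁ k) = 0 := fun k => by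
    have : f₁ k ∈ LinearMap.ker g₁ := hfg₁ ▸ LinearMap.mem_range_self f₁ k
    exact this
  have hgk₂ : ∀ k, g₂ (f₂ k) = 0 := fun k => by
    have : f₂ k ∈ LinearMap.ker g₂ := hfg₂ ▸ LinearMap.mem_range_self f₂ k
    exact this
  -- SES 1 : K₁ → F₁ × A → N₂ × B
  let f₁' : K₁ →ₗ[S] F₁ × A := (LinearMap.inl S F₁ A).comp f₁
  let g₁' : F₁ × A →ₗ[S] N₂ × B := e.toLinearMap.comp (g₁.prodMap LinearMap.id)
  have hf₁' : Function.Injective f₁' := by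
    intro a b h
    apply hf₁
    exact congrArg Prod.fst h
  have hg₁' : Function.Surjective g₁' := by
    apply e.surjective.comp
    rintro ⟨u, a⟩
    obtain ⟨v, hv⟩ := hg₁ u
    exact ⟨(v, a), by simp [hv]⟩
  have hfg₁' : LinearMap.range f₁' = LinearMap.ker g₁' := by
    ext ⟨u, a⟩
    constructor
    · rintro ⟨k, hk⟩
      have h1 : f₁ k = u := congrArg Prod.fst hk
      have h2 : (0 : A) = a := congrArg Prod.snd hk
      show e (g₁ u, a) = 0
      rw [← h1, ← h2, hgk₁]
      exact map_zero _
    · intro h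
      have h' : e (g₁ u, a) = 0 := h
      have h0 : ((g₁ u : N₁), a) = (0 : N₁ × A) := e.injective (by rw [h', map_zero])
      have hg0 : g₁ u = 0 := congrArg Prod.fst h0
      have ha : a = 0 := congrArg Prod.snd h0
      obtain ⟨k, hk⟩ := (hfg₁ ▸ (hg0 : u ∈ LinearMap.ker g₁) : u ∈ LinearMap.range f₁)
      refine ⟨k, ?_⟩
      show ((f₁ k : F₁), (0 : A)) = (u, a)
      rw [hk, ha]
  -- SES 2 : K₂ → F₂ × B → N₂ × B
  let f₂' : K₂ →ₗ[S] F₂ × B := (LinearMap.inl S F₂ B).comp f₂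
  let g₂' : F₂ × B →ₗ[S] N₂ × B := g₂.prodMap LinearMap.id
  have hf₂' : Function.Injective f₂' := by
    intro a b h
    apply hf₂
    exact congrArg Prod.fst h
  have hg₂' : Function.Surjective g₂' := by
    rintro ⟨u, b⟩
    obtain ⟨v, hv⟩ := hg₂ u
    exact ⟨(v, b), by simp [g₂', hv]⟩
  have hfg₂' : LinearMap.range f₂' = LinearMap.ker g₂' := by
    ext ⟨u, b⟩
    constructor
    · rintro ⟨k, hk⟩
      have h1 : f₂ k = u := congrArg Prod.fst hk
      have h2 : (0 : B) = b := congrArg Prod.snd hk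
      show ((g₂ u : N₂), b) = 0
      rw [← h1, ← h2, hgk₂]
      rfl
    · intro h
      have h' : ((g₂ u : N₂), b) = 0 := h
      have hg0 : g₂ u = 0 := congrArg Prod.fst h'
      have hb : b = 0 := congrArg Prod.snd h'
      obtain ⟨k, hk⟩ := (hfg₂ ▸ (hg0 : u ∈ LinearMap.ker g₂) : u ∈ LinearMap.range f₂)
      refine ⟨k, ?_⟩
      show ((f₂ k : F₂), (0 : B)) = (u, b)
      rw [hk, hb]
  have hP₁ : Module.Projective S (F₁ × A) := inferInstance
  have hP₂ : Module.Projective S (F₂ × B) := inferInstance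
  obtain ⟨e'⟩ := schanuel f₁' g₁' hf₁' hg₁' hfg₁' f₂' g₂' hf₂' hg₂' hfg₂' hP₁ hP₂
  exact ⟨ModuleCat.of S (F₂ × B), ModuleCat.of S (F₁ × A),
    (inferInstance : Module.Free S (F₂ × B)), (inferInstance : Module.Finite S (F₂ × B)),
    (inferInstance : Module.Free S (F₁ × A)), (inferInstance : Module.Finite S (F₁ × A)), ⟨e'⟩⟩

lemma syz_schanuel : ∀ {n : ℕ} {K₁ X₁ K₂ X₂ : ModuleCat.{0} S},
    IsSyzygyOf S n K₁ X₁ → IsSyzygyOf S n K₂ X₂ → StEq (S := S) X₁ X₂ →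
    StEq (S := S) K₁ K₂ := by
  intro n
  induction n with
  | zero =>
    intro K₁ X₁ K₂ X₂ h₁ h₂ hX
    cases h₁
    cases h₂
    exact hX
  | succ n ih =>
    intro K₁ X₁ K₂ X₂ h₁ h₂ hX
    cases h₁ with
    | succ F₁ hfree₁ hfin₁ f₁ g₁ hf₁ hg₁ hfg₁ hN₁ =>
      cases h₂ with
      | succ F₂ hfree₂ hfin₂ f₂ g₂ hf₂ hg₂ hfg₂ hN₂ =>
        letI := hfree₁; letI := hfin₁; letI := hfree₂; letI := hfin₂
        exact stEq_step f₁ g₁ hf₁ hg₁ hfg₁ f₂ g₂ hf₂ hg₂ hfg₂ (ih hN₁ hN₂ hX)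

end schanuel2
end Stmt12Aux

namespace Stmt12Aux
section local_ring
open IsLocalRing
variable {R : Type} [CommRing R] [IsLocalRing R]

/-- Minimal presentation step over a local ring. -/
lemma min_step (K : Type) [AddCommGroup K] [Module R K] [Module.Finite R K] :
    ∃ (d : ℕ) (g : (Fin d → R) →ₗ[R] K), Function.Surjective g ∧
      LinearMap.ker g ≤ (maximalIdeal R) • (⊤ : Submodule R (Fin d → R)) := by
  classical
  set m := maximalIdeal R with hm
  haveI : m.IsMaximal := hm ▸ (inferInstance : (maximalIdeal R).IsMaximal)
  set V := K ⧸ (m • (⊤ : Submodule R K)) with hV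
  set kk := R ⧸ m with hkk
  letI : Module.Finite R V := Module.Finite.quotient R _
  letI : Module.Finite kk V := Module.Finite.of_restrictScalars_finite R _ _
  letI : Field kk := Ideal.Quotient.field m
  letI : Module.Free kk V := Module.Free.of_divisionRing _ _
  let b := Module.Free.chooseBasis kk V
  let ι := Module.Free.ChooseBasisIndex kk V
  let d := Fintype.card ι
  let eι : ι ≃ Fin d := Fintype.equivFin ι
  let b' : Module.Basis (Fin d) kk V := b.reindex eι
  have hmk : Function.Surjective (Submodule.mkQ (m • (⊤ : Submodule R K))) :=
    Submodule.mkQ_surjective _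
  choose x hx using fun i : Fin d => hmk (b' i)
  let g : (Fin d → R) →ₗ[R] K := Fintype.linearCombination R x
  have hgapp : ∀ c : Fin d → R, g c = ∑ i, c i • x i := fun c => by
    simp [g, Fintype.linearCombination_apply]
  have hmkq : ∀ (r : R) (v : K), Submodule.mkQ (m • (⊤ : Submodule R K)) (r • v) =
      (Ideal.Quotient.mk m r) • (Submodule.mkQ (m • (⊤ : Submodule R K)) v) := fun r v => rfl
  have hmk_g : ∀ c : Fin d → R, Submodule.mkQ (m • (⊤ : Submodule R K)) (g c) =
      ∑ i, (Ideal.Quotient.mk m (c i)) • b' i := fun c => by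
    rw [hgapp, map_sum]
    congr 1
    ext i
    rw [hmkq, hx]
  have hgsurj : Function.Surjective g := by
    have hsup : (⊤ : Submodule R K) ≤ LinearMap.range g ⊔ m • (⊤ : Submodule R K) := by
      intro v _
      have hrepr : ∑ i, b'.repr (Submodule.mkQ _ v) i • b' i = Submodule.mkQ _ v :=
        b'.sum_repr _
      choose c hc using fun i : Fin d => Ideal.Quotient.mk_surjective (I := m)
        (b'.repr (Submodule.mkQ (m • (⊤ : Submodule R K)) v) i)
      have hveq : Submodule.mkQ (m • (⊤ : Submodule R K)) (v - g c) = 0 := by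
        rw [map_sub, hmk_g]
        rw [show ∑ i, (Ideal.Quotient.mk m (c i)) • b' i =
          ∑ i, b'.repr (Submodule.mkQ (m • (⊤ : Submodule R K)) v) i • b' i from by
            congr 1; ext i; rw [hc]]
        rw [hrepr, sub_self]
      have hmem : v - g c ∈ m • (⊤ : Submodule R K) := by
        rwa [← Submodule.Quotient.mk_eq_zero]
      refine Submodule.mem_sup.mpr ⟨g c, LinearMap.mem_range_self g c, v - g c, hmem, ?_⟩
      abel
    have hjac : m ≤ Ideal.jacobson ⊥ := by
      rw [IsLocalRing.jacobson_eq_maximalIdeal ⊥ bot_ne_top]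
    have hfg : (⊤ : Submodule R K).FG := Module.finite_def.mp inferInstance
    have := Submodule.le_of_le_smul_of_le_jacobson_bot hfg hjac hsup
    rw [← LinearMap.range_eq_top]
    exact top_le_iff.mp this
  refine ⟨d, g, hgsurj, ?_⟩
  intro c hc
  have hc0 : g c = 0 := hc
  have hlin : ∀ i, Ideal.Quotient.mk m (c i) = 0 := by
    have hsum : ∑ i, (Ideal.Quotient.mk m (c i)) • b' i = 0 := by
      rw [← hmk_g, hc0, map_zero]
    exact fun i => Fintype.linearIndependent_iff.mp b'.linearIndependent _ hsum i
  have hcm : ∀ i, c i ∈ m := fun i => Ideal.Quotient.eq_zero_iff_mem.mp (hlin i)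
  have hdecomp : c = ∑ i, Pi.single i (c i) := (Finset.univ_sum_single c).symm
  rw [hdecomp]
  refine Submodule.sum_mem _ fun i _ => ?_
  have hsingle : Pi.single i (c i) = c i • (Pi.single i (1:R) : Fin d → R) := by
    funext j
    simp only [Pi.single_apply, Pi.smul_apply, smul_eq_mul]
    split <;> simp
  rw [hsingle]
  exact Submodule.smul_mem_smul (hcm i) Submodule.mem_top

/-- A nontrivial finitely generated module over a local ring surjects onto the residue field. -/
lemma exists_surj_residue (K : Type) [AddCommGroup K] [Module R K] [Module.Finite R K]
    [Nontrivial K] :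
    ∃ φ : K →ₗ[R] (R ⧸ maximalIdeal R), Function.Surjective φ := by
  set m := maximalIdeal R with hm
  haveI : m.IsMaximal := hm ▸ (inferInstance : (maximalIdeal R).IsMaximal)
  set kk := R ⧸ m with hkk
  have hne : (m • (⊤ : Submodule R K)) ≠ ⊤ := by
    intro h
    have hjac : m ≤ Ideal.jacobson ⊥ := by
      rw [hm, IsLocalRing.jacobson_eq_maximalIdeal ⊥ bot_ne_top]
    have hfg : (⊤ : Submodule R K).FG := Module.finite_def.mp inferInstance
    have hbot := Submodule.eq_bot_of_le_smul_of_le_jacobson_bot m ⊤ hfg (le_of_eq h.symm) hjac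
    obtain ⟨a, b, hab⟩ := exists_pair_ne K
    apply hab
    have ha : a ∈ (⊥ : Submodule R K) := hbot ▸ Submodule.mem_top
    have hb : b ∈ (⊥ : Submodule R K) := hbot ▸ Submodule.mem_top
    rw [Submodule.mem_bot] at ha hb
    rw [ha, hb]
  letI : Nontrivial (K ⧸ (m • (⊤ : Submodule R K))) :=
    Submodule.Quotient.nontrivial_iff.mpr hne
  letI : Field kk := Ideal.Quotient.field m
  letI : Module.Free kk (K ⧸ (m • (⊤ : Submodule R K))) := Module.Free.of_divisionRing _ _
  let b := Module.Free.chooseBasis kk (K ⧸ (m • (⊤ : Submodule R K)))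
  obtain ⟨i₀⟩ := b.index_nonempty
  let ψ : (K ⧸ (m • (⊤ : Submodule R K))) →ₗ[R] kk := (b.coord i₀).restrictScalars R
  refine ⟨ψ.comp (Submodule.mkQ _), ?_⟩
  have hψ : Function.Surjective ψ := by
    intro c
    refine ⟨c • b i₀, ?_⟩
    show (b.coord i₀) (c • b i₀) = c
    rw [map_smul, Module.Basis.coord_apply, Module.Basis.repr_self]
    simp
  exact hψ.comp (Submodule.mkQ_surjective _)

end local_ring
end Stmt12Aux

namespace Stmt12Aux
section more
variable {S : Type} [CommRing S]

lemma stEq_free_projective {X Y : Type} [AddCommGroup X] [AddCommGroup Y]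
    [Module S X] [Module S Y] (h : StEq (S := S) X Y) (hY : Module.Free S Y) :
    Module.Projective S X := by
  obtain ⟨A, B, hfrA, hfinA, hfrB, hfinB, ⟨e⟩⟩ := h
  letI := hfrB
  letI := hY
  haveI : Module.Projective S (Y × B) := inferInstance
  exact Module.Projective.of_split
    (e.toLinearMap.comp (LinearMap.inl S X A))
    ((LinearMap.fst S X A).comp e.symm.toLinearMap)
    (by ext x; simp)

lemma split_compl {B C : Type} [AddCommGroup B] [AddCommGroup C] [Module S B] [Module S C]
    (g : B →ₗ[S] C) (hg : Function.Surjective g) (hC : Module.Projective S C) :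
    ∃ C' : Submodule S B, LinearMap.ker g ⊔ C' = ⊤ ∧ LinearMap.ker g ⊓ C' = ⊥ := by
  obtain ⟨σ, hσ⟩ := Module.projective_lifting_property g LinearMap.id hg
  have hσ' : ∀ c, g (σ c) = c := fun c => by
    have := congrArg (fun h => h c) (congrArg DFunLike.coe hσ)
    simpa using this
  refine ⟨LinearMap.range σ, ?_, ?_⟩
  · rw [eq_top_iff]
    intro b _
    refine Submodule.mem_sup.mpr ⟨b - σ (g b), ?_, σ (g b), LinearMap.mem_range_self _ _, by abel⟩
    simp [LinearMap.mem_ker, map_sub, hσ']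
  · rw [eq_bot_iff]
    rintro x ⟨hk, c, rfl⟩
    have : g (σ c) = 0 := hk
    rw [hσ'] at this
    simp [this]

end more

section chain
open CategoryTheory
variable {R : Type} [CommRing R] {S : Type} [CommRing S] [Algebra R S]
variable (P : ProjectiveResolution (ModuleCat.of R S))

lemma chain [IsNoetherianRing R] (M : ModuleCat.{0} R) (hTVM : TV P M)
    (hfinM : Module.Finite R M) (j : ℕ) :
    ∃ K : ModuleCat.{0} R, IsSyzygyOf R j K M ∧ TV P K ∧ Module.Finite R K := by
  induction j with
  | zero => exact ⟨M, IsSyzygyOf.zero M, hTVM, hfinM⟩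
  | succ j ih =>
    obtain ⟨K, hsyz, hTVK, hfinK⟩ := ih
    letI := hfinK
    obtain ⟨d, g, hg⟩ := Module.Finite.exists_fin' R K
    letI : IsNoetherian R (Fin d → R) :=
      isNoetherian_of_isNoetherianRing_of_finite R (Fin d → R)
    have hfinker : Module.Finite R (LinearMap.ker g) :=
      Module.Finite.of_injective (LinearMap.ker g).subtype (Submodule.injective_subtype _)
    have hTVker : TV P (LinearMap.ker g) :=
      TV_step P (LinearMap.ker g).subtype g (Submodule.injective_subtype _) hg
        (Submodule.range_subtype _) hTVK
    exact ⟨ModuleCat.of R (LinearMap.ker g),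
      IsSyzygyOf.succ (ModuleCat.of R (Fin d → R))
        (inferInstance : Module.Free R (Fin d → R))
        (inferInstance : Module.Finite R (Fin d → R))
        (LinearMap.ker g).subtype g (Submodule.injective_subtype _) hg
        (Submodule.range_subtype _) hsyz,
      hTVker, hfinker⟩

end chain

section tensor_nontrivial
open IsLocalRing
variable {R : Type} [CommRing R] {S : Type} [CommRing S] [Algebra R S]

/-- If `S` is local and `R → S` is a local homomorphism of local rings, then
`S ⊗[R] K ≠ 0` for `K` finitely generated nontrivial. -/
lemma tensor_nontrivial [IsLocalRing R] [IsLocalRing S]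
    (hloc : IsLocalHom (algebraMap R S))
    (K : Type) [AddCommGroup K] [Module R K] [Module.Finite R K] [Nontrivial K]
    (h : Subsingleton (TensorProduct R S K)) : False := by
  obtain ⟨φ, hφ⟩ := exists_surj_residue (R := R) K
  have hsurj : Function.Surjective (LinearMap.lTensor S φ) := LinearMap.lTensor_surjective S hφ
  haveI hsub : Subsingleton (TensorProduct R S (R ⧸ maximalIdeal R)) :=
    Function.Surjective.subsingleton hsurj
  -- flip and identify with S ⧸ m S
  have e1 : TensorProduct R S (R ⧸ maximalIdeal R) ≃ₗ[R]
      TensorProduct R (R ⧸ maximalIdeal R) S := TensorProduct.comm R S _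
  have e2 : TensorProduct R (R ⧸ maximalIdeal R) S ≃ₗ[R]
      S ⧸ ((maximalIdeal R) • (⊤ : Submodule R S)) :=
    TensorProduct.quotTensorEquivQuotSMul S (maximalIdeal R)
  haveI hsub2 : Subsingleton (S ⧸ ((maximalIdeal R) • (⊤ : Submodule R S))) :=
    (e2.toEquiv.subsingleton_congr).mp ((e1.toEquiv.subsingleton_congr).mp hsub)
  have htop : (maximalIdeal R) • (⊤ : Submodule R S) = ⊤ :=
    Submodule.Quotient.subsingleton_iff.mp hsub2
  have hle : (maximalIdeal R) • (⊤ : Submodule R S) ≤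
      (maximalIdeal S).restrictScalars R := by
    refine Submodule.smul_le.mpr ?_
    intro r hr s _
    have hrnu : ¬ IsUnit r := hr
    have : ¬ IsUnit (algebraMap R S r) := fun hu => hrnu (hloc.map_nonunit r hu)
    have hmem : algebraMap R S r ∈ maximalIdeal S := this
    show r • s ∈ maximalIdeal S
    rw [Algebra.smul_def]
    exact Ideal.mul_mem_right s _ hmem
  rw [htop] at hle
  have h1 : (1 : S) ∈ maximalIdeal S := hle Submodule.mem_top
  exact (IsLocalRing.maximalIdeal.isMaximal S).ne_top (Ideal.eq_top_iff_one _ |>.mpr h1)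

/-- The range of the base change of a map landing in `m • ⊤` lands in `n • ⊤`. -/
lemma range_baseChange_le [IsLocalRing R] [IsLocalRing S]
    (hloc : IsLocalHom (algebraMap R S))
    {K F : Type} [AddCommGroup K] [AddCommGroup F] [Module R K] [Module R F]
    (f : K →ₗ[R] F) (hrange : LinearMap.range f ≤ (maximalIdeal R) • (⊤ : Submodule R F)) :
    LinearMap.range (LinearMap.baseChange S f) ≤
      (maximalIdeal S) • (⊤ : Submodule S (TensorProduct R S F)) := by
  rintro x ⟨y, rfl⟩
  induction y using TensorProduct.induction_on with
  | zero => rw [map_zero]; exact Submodule.zero_mem _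
  | add a b ha hb => rw [map_add]; exact Submodule.add_mem _ ha hb
  | tmul s kel =>
    have : LinearMap.baseChange S f (s ⊗ₜ kel) = s ⊗ₜ (f kel) := rfl
    rw [this]
    have hmem : f kel ∈ (maximalIdeal R) • (⊤ : Submodule R F) :=
      hrange (LinearMap.mem_range_self f kel)
    -- prove s ⊗ₜ z ∈ n • ⊤ for z ∈ m • ⊤ by smul induction
    refine Submodule.smul_induction_on hmem ?_ ?_
    · intro r hr z _
      have halg : algebraMap R S r ∈ maximalIdeal S := by
        have hrnu : ¬ IsUnit r := hr
        exact fun hu => hrnu (hloc.map_nonunit r hu)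
      have : (s ⊗ₜ (r • z) : TensorProduct R S F) = (algebraMap R S r) • (s ⊗ₜ z) := by
        rw [TensorProduct.tmul_smul, algebraMap_smul]
      rw [this]
      exact Submodule.smul_mem_smul halg Submodule.mem_top
    · intro z w hz hw
      have : (s ⊗ₜ (z + w) : TensorProduct R S F) = s ⊗ₜ z + s ⊗ₜ w :=
        TensorProduct.tmul_add s z w
      rw [this]
      exact Submodule.add_mem _ hz hw

end tensor_nontrivial
end Stmt12Aux

open Stmt12Aux in
/-- Along a local homomorphism `R → S` of Noetherian local rings, if `M` is a finitely
generated `R`-module with `Tor_i^R(M,S) = 0` for `i > 0`, then `pd_R M < ∞` iff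
`pd_S (M ⊗_R S) < ∞`. -/
theorem stmt_12 (R S : Type) [CommRing R] [CommRing S]
    [IsNoetherianRing R] [IsNoetherianRing S] [IsLocalRing R] [IsLocalRing S]
    [Algebra R S] (hloc : IsLocalHom (algebraMap R S))
    (M : Type) [AddCommGroup M] [Module R M] [Module.Finite R M]
    (hTor : ∀ i : ℕ, 0 < i →
      Subsingleton (TorGroup R (ModuleCat.of R M) (ModuleCat.of R S) i)) :
    (∃ n : ℕ, ProjDimLE R n (ModuleCat.of R M)) ↔
      (∃ n : ℕ, ProjDimLE S n (ModuleCat.of S (TensorProduct R S M))) := by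
  classical
  obtain ⟨P⟩ := (inferInstance : HasProjectiveResolution (ModuleCat.of R S)).out
  have hTVM : TV P M := TV_of_tor P M hTor
  constructor
  · rintro ⟨n, K, hsyz, hfree⟩
    obtain ⟨tvK, finK, syzS⟩ := syzygy_package P hsyz hTVM
      (inferInstanceAs (Module.Finite R M))
    letI := hfree
    exact ⟨n, ModuleCat.of S (TensorProduct R S K), syzS,
      (inferInstance : Module.Free S (TensorProduct R S K))⟩
  · rintro ⟨n, K', hsyzK', hfreeK'⟩
    obtain ⟨K, hsyz, hTVK, hfinK⟩ := chain P (ModuleCat.of R M) hTVM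
      (inferInstanceAs (Module.Finite R M)) n
    letI := hfinK
    obtain ⟨tvK2, finK2, syzS⟩ := syzygy_package P hsyz hTVM
      (inferInstanceAs (Module.Finite R M))
    have hst : StEq (S := S) (TensorProduct R S K) K' :=
      syz_schanuel syzS hsyzK' (stEq_refl _)
    have hproj : Module.Projective S (TensorProduct R S K) := stEq_free_projective hst hfreeK'
    obtain ⟨d, g, hg, hker⟩ := min_step (R := R) K
    set Kk := LinearMap.ker g with hKk
    letI : IsNoetherian R (Fin d → R) := isNoetherian_of_isNoetherianRing_of_finite R _
    letI : Module.Finite R Kk :=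
      Module.Finite.of_injective Kk.subtype (Submodule.injective_subtype _)
    have hf' : Function.Injective (LinearMap.baseChange S Kk.subtype) :=
      lTensor_inj_of_rTensor_inj _ (inj_step P Kk.subtype g (Submodule.injective_subtype _) hg
        (Submodule.range_subtype _) hTVK)
    have hexfg : Function.Exact Kk.subtype g :=
      LinearMap.exact_iff.mpr (Submodule.range_subtype _).symm
    have hex : Function.Exact (LinearMap.lTensor S Kk.subtype) (LinearMap.lTensor S g) :=
      lTensor_exact S hexfg hg
    have hg' : Function.Surjective (LinearMap.baseChange S g) :=
      LinearMap.lTensor_surjective S hg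
    have hfg' : LinearMap.range (LinearMap.baseChange S Kk.subtype) =
        LinearMap.ker (LinearMap.baseChange S g) := by
      ext x
      rw [LinearMap.mem_range, LinearMap.mem_ker]
      constructor
      · rintro ⟨y, rfl⟩
        exact (hex _).mpr ⟨y, rfl⟩
      · intro hx
        exact (hex x).mp hx
    obtain ⟨C', hsup, hinf⟩ := split_compl (LinearMap.baseChange S g) hg' hproj
    have hrange : LinearMap.range (LinearMap.baseChange S Kk.subtype) ≤
        (IsLocalRing.maximalIdeal S) • (⊤ : Submodule S (TensorProduct R S (Fin d → R))) := by
      refine range_baseChange_le hloc Kk.subtype ?_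
      rw [Submodule.range_subtype]
      exact hker
    have hjac : IsLocalRing.maximalIdeal S ≤ Ideal.jacobson ⊥ := by
      rw [IsLocalRing.jacobson_eq_maximalIdeal ⊥ bot_ne_top]
    have hfgtop : (⊤ : Submodule S (TensorProduct R S (Fin d → R))).FG :=
      Module.finite_def.mp inferInstance
    have hle : (⊤ : Submodule S (TensorProduct R S (Fin d → R))) ≤
        C' ⊔ (IsLocalRing.maximalIdeal S) •
          (⊤ : Submodule S (TensorProduct R S (Fin d → R))) := by
      refine le_trans (le_of_eq hsup.symm) (sup_le ?_ le_sup_left)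
      rw [← hfg']
      exact le_trans hrange le_sup_right
    have hC'top : C' = ⊤ :=
      eq_top_iff.mpr (Submodule.le_of_le_smul_of_le_jacobson_bot hfgtop hjac hle)
    have hkerbot : LinearMap.ker (LinearMap.baseChange S g) = ⊥ := by
      rw [hC'top, inf_top_eq] at hinf
      exact hinf
    haveI hsub : Subsingleton (TensorProduct R S Kk) := by
      have h0 : ∀ x : TensorProduct R S Kk, LinearMap.baseChange S Kk.subtype x = 0 := by
        intro x
        have hx : LinearMap.baseChange S Kk.subtype x ∈
            LinearMap.ker (LinearMap.baseChange S g) :=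
          hfg' ▸ LinearMap.mem_range_self _ x
        rw [hkerbot, Submodule.mem_bot] at hx
        exact hx
      constructor
      intro a b
      apply hf'
      rw [h0, h0]
    have hKkbot : Kk = ⊥ := by
      by_contra hne
      haveI : Nontrivial Kk := Submodule.nontrivial_iff_ne_bot.mpr hne
      exact tensor_nontrivial hloc Kk hsub
    have hginj : Function.Injective g := by
      rw [← LinearMap.ker_eq_bot]
      exact hKkbot
    have e : (Fin d → R) ≃ₗ[R] K := LinearEquiv.ofBijective g ⟨hginj, hg⟩
    have hfreeK : Module.Free R K := Module.Free.of_equiv e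
    exact ⟨n, K, hsyz, hfreeK⟩
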